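/- Let L be a restricted Lie algebra over a field F of characteristic 2 with 2-map ω. On the F-module of sequences f : ℕ → L (representing formal power series Σ tⁿ f(n) with coefficients in L), define the extended bracket B(f,g)(n) = Σ_{i+j=n} ⁅f(i), g(j)⁆ and the extended 2-map S(f)(n) = (ω(f(m)) if n = 2m is even, 0 if n is odd) + Σ_{i<j, i+j=n} ⁅f(i), f(j)⁆. Then for all sequences f, g and all λ ∈ F: (1) S(λ·f) = λ²·S(f); (2) B(f, S(g)) = B(B(f,g), g); (3) S(f + g) = S(f) + S(g) + B(f,g). Hence S is a 2-map for the extended bracket, making the formal power series into a restricted Lie algebra in characteristic 2. -/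

import Mathlib

open Finset

private lemma swap_sum' {M : Type*} [AddCommMonoid M] (n : ℕ) (h : ℕ → ℕ → M) :
    ∑ q ∈ (antidiagonal n).filter (fun q => q.1 < q.2), h q.2 q.1 =
    ∑ q ∈ (antidiagonal n).filter (fun q => q.2 < q.1), h q.1 q.2 := by
  apply Finset.sum_nbij' (i := fun q => (q.2, q.1)) (j := fun q => (q.2, q.1)) <;>
    simp [Finset.mem_filter, Finset.HasAntidiagonal.mem_antidiagonal] <;> omega

private lemma diag_filter' (n : ℕ) :
    (antidiagonal n).filter (fun q => ¬ q.1 < q.2 ∧ ¬ q.2 < q.1) =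
    if Even n then {(n/2, n/2)} else (∅ : Finset (ℕ × ℕ)) := by
  split_ifs with he
  · obtain ⟨m, hm⟩ := he
    ext q
    simp only [Finset.mem_filter, Finset.HasAntidiagonal.mem_antidiagonal, Finset.mem_singleton, Prod.ext_iff]
    omega
  · rw [Nat.not_even_iff] at he
    ext q
    simp only [Finset.mem_filter, Finset.HasAntidiagonal.mem_antidiagonal, Finset.notMem_empty, iff_false,
      not_and]
    omega

private lemma split_sum' {M : Type*} [AddCommMonoid M] (n : ℕ) (h : ℕ → ℕ → M) :
    ∑ q ∈ antidiagonal n, h q.1 q.2 =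
      (∑ q ∈ (antidiagonal n).filter (fun q => q.1 < q.2), h q.1 q.2) +
      (∑ q ∈ (antidiagonal n).filter (fun q => q.2 < q.1), h q.1 q.2) +
      (if Even n then h (n/2) (n/2) else 0) := by
  have h1 : ((antidiagonal n).filter fun q => ¬ q.1 < q.2).filter (fun q => q.2 < q.1)
      = (antidiagonal n).filter (fun q => q.2 < q.1) := by
    rw [Finset.filter_filter]
    apply Finset.filter_congr
    intro q _
    simp; omega
  have h2 : ((antidiagonal n).filter fun q => ¬ q.1 < q.2).filter (fun q => ¬ q.2 < q.1)
      = (antidiagonal n).filter (fun q => ¬ q.1 < q.2 ∧ ¬ q.2 < q.1) := by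
    rw [Finset.filter_filter]
  rw [← Finset.sum_filter_add_sum_filter_not (antidiagonal n) (fun q => q.1 < q.2)]
  rw [← Finset.sum_filter_add_sum_filter_not ((antidiagonal n).filter fun q => ¬ q.1 < q.2)
    (fun q => q.2 < q.1), h1, h2, diag_filter', add_assoc]
  congr 1
  split_ifs <;> simp

private lemma triple_reindex' {M : Type*} [AddCommMonoid M] (n : ℕ) (h : ℕ → ℕ → ℕ → M) :
    ∑ p ∈ antidiagonal n, ∑ q ∈ antidiagonal p.2, h p.1 q.1 q.2 =
    ∑ p ∈ antidiagonal n, ∑ q ∈ antidiagonal p.1, h q.1 q.2 p.2 := by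
  rw [Finset.sum_sigma', Finset.sum_sigma']
  refine Finset.sum_nbij' (i := fun x => ⟨(x.1.1 + x.2.1, x.2.2), (x.1.1, x.2.1)⟩)
    (j := fun x => ⟨(x.2.1, x.2.2 + x.1.2), (x.2.2, x.1.2)⟩) ?_ ?_ ?_ ?_ ?_
  · rintro ⟨⟨a,b⟩,⟨c,d⟩⟩ hx
    simp only [Finset.mem_sigma, Finset.HasAntidiagonal.mem_antidiagonal, and_true, true_and] at hx ⊢
    omega
  · rintro ⟨⟨a,b⟩,⟨c,d⟩⟩ hx
    simp only [Finset.mem_sigma, Finset.HasAntidiagonal.mem_antidiagonal, and_true, true_and] at hx ⊢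
    omega
  · rintro ⟨⟨a,b⟩,⟨c,d⟩⟩ hx
    simp only [Finset.mem_sigma, Finset.HasAntidiagonal.mem_antidiagonal] at hx
    simp only [Sigma.mk.inj_iff, Prod.mk.injEq, heq_eq_eq, and_true, true_and]
    omega
  · rintro ⟨⟨a,b⟩,⟨c,d⟩⟩ hx
    simp only [Finset.mem_sigma, Finset.HasAntidiagonal.mem_antidiagonal] at hx
    simp only [Sigma.mk.inj_iff, Prod.mk.injEq, heq_eq_eq, and_true, true_and]
    omega
  · rintro ⟨⟨a,b⟩,⟨c,d⟩⟩ _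
    rfl

/-- The extended bracket on formal power series (sequences) with coefficients in `L`. -/
def extBracket {L : Type*} [LieRing L] (f g : ℕ → L) : ℕ → L :=
  fun n => ∑ ij ∈ Finset.HasAntidiagonal.antidiagonal n, ⁅f ij.1, g ij.2⁆

/-- The extended 2-map on formal power series (sequences) with coefficients in `L`. -/
def extTwoMap {L : Type*} [LieRing L] (ω : L → L) (f : ℕ → L) : ℕ → L :=
  fun n => (if Even n then ω (f (n / 2)) else 0) +
    ∑ ij ∈ (Finset.HasAntidiagonal.antidiagonal n).filter (fun ij => ij.1 < ij.2), ⁅f ij.1, f ij.2⁆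

/-- The extended 2-map is a 2-map for the extended bracket: formal power series over a
restricted Lie algebra in characteristic 2 again form a restricted Lie algebra. -/
theorem statement10 (F : Type*) [Field F] [CharP F 2]
    (L : Type*) [LieRing L] [LieAlgebra F L]
    (ω : L → L)
    (hω1 : ∀ (c : F) (x : L), ω (c • x) = c ^ 2 • ω x)
    (hω2 : ∀ x y : L, ⁅x, ω y⁆ = ⁅⁅x, y⁆, y⁆)
    (hω3 : ∀ x y : L, ω (x + y) = ω x + ω y + ⁅x, y⁆) :
    (∀ (c : F) (f : ℕ → L), extTwoMap ω (c • f) = c ^ 2 • extTwoMap ω f) ∧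
    (∀ f g : ℕ → L, extBracket f (extTwoMap ω g) = extBracket (extBracket f g) g) ∧
    (∀ f g : ℕ → L, extTwoMap ω (f + g) = extTwoMap ω f + extTwoMap ω g + extBracket f g) := by
  have h2F : (2 : F) = 0 := by exact_mod_cast CharP.cast_eq_zero F 2
  have h2 : ∀ x : L, x + x = 0 := by
    intro x
    rw [← two_smul F x, h2F, zero_smul]
  have hneg : ∀ x : L, -x = x := fun x => neg_eq_of_add_eq_zero_left (h2 x)
  have jac : ∀ x y z : L, ⁅x, ⁅y, z⁆⁆ = ⁅⁅x, y⁆, z⁆ + ⁅⁅x, z⁆, y⁆ := by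
    intro x y z
    rw [leibniz_lie]
    congr 1
    rw [← lie_skew, hneg]
  have lie_sum' : ∀ (x : L) (s : Finset (ℕ × ℕ)) (h : ℕ × ℕ → L),
      ⁅x, ∑ q ∈ s, h q⁆ = ∑ q ∈ s, ⁅x, h q⁆ := by
    intro x s h
    induction s using Finset.induction_on with
    | empty => simp
    | insert _ _ hq ih => simp [Finset.sum_insert hq, lie_add, ih]
  have sum_lie' : ∀ (s : Finset (ℕ × ℕ)) (h : ℕ × ℕ → L) (x : L),
      ⁅∑ q ∈ s, h q, x⁆ = ∑ q ∈ s, ⁅h q, x⁆ := by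
    intro s h x
    induction s using Finset.induction_on with
    | empty => simp
    | insert _ _ hq ih => simp [Finset.sum_insert hq, add_lie, ih]
  refine ⟨?_, ?_, ?_⟩
  · intro c f
    funext n
    simp only [extTwoMap, Pi.smul_apply, hω1, smul_lie, lie_smul, smul_smul, pow_two,
      smul_add, Finset.smul_sum]
    congr 1
    split_ifs <;> simp
  · intro f g
    funext n
    have key : ∀ i m : ℕ, ⁅f i, extTwoMap ω g m⁆ =
        ∑ q ∈ antidiagonal m, ⁅⁅f i, g q.1⁆, g q.2⁆ := by
      intro i m
      simp only [extTwoMap, lie_add, lie_sum', jac, Finset.sum_add_distrib]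
      simp only [split_sum' m (fun a b => (⁅⁅f i, g a⁆, g b⁆ : L)),
        swap_sum' m (fun a b => (⁅⁅f i, g a⁆, g b⁆ : L))]
      rw [show ⁅f i, (if Even m then ω (g (m/2)) else 0)⁆ =
        if Even m then ⁅⁅f i, g (m/2)⁆, g (m/2)⁆ else 0 from by
        split_ifs
        · exact hω2 _ _
        · exact lie_zero _]
      abel
    simp only [extBracket, key, sum_lie']
    exact triple_reindex' n (fun i a b => ⁅⁅f i, g a⁆, g b⁆)
  · intro f g
    funext n
    simp only [extTwoMap, extBracket, Pi.add_apply]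
    simp only [split_sum' n (fun a b => (⁅f a, g b⁆ : L))]
    have e1 : ∀ q : ℕ × ℕ, ⁅f q.1 + g q.1, f q.2 + g q.2⁆ =
        ⁅f q.1, f q.2⁆ + ⁅g q.1, g q.2⁆ + (⁅f q.1, g q.2⁆ + ⁅g q.1, f q.2⁆) := by
      intro q; simp only [add_lie, lie_add]; abel
    simp only [e1, Finset.sum_add_distrib]
    have e2 : ∑ q ∈ (antidiagonal n).filter (fun q => q.1 < q.2), ⁅g q.1, f q.2⁆
        = ∑ q ∈ (antidiagonal n).filter (fun q => q.2 < q.1), ⁅f q.1, g q.2⁆ := by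
      have h' : ∑ q ∈ (antidiagonal n).filter (fun q => q.1 < q.2), ⁅g q.1, f q.2⁆
          = ∑ q ∈ (antidiagonal n).filter (fun q => q.1 < q.2), ⁅f q.2, g q.1⁆ :=
        Finset.sum_congr rfl (fun q _ => by rw [← lie_skew, hneg])
      rw [h']
      exact swap_sum' n (fun a b => (⁅f a, g b⁆ : L))
    rw [e2]
    have e3 : (if Even n then ω (f (n/2) + g (n/2)) else 0) =
        (if Even n then ω (f (n/2)) else 0) + (if Even n then ω (g (n/2)) else 0) +
        (if Even n then ⁅f (n/2), g (n/2)⁆ else 0) := by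
      split_ifs <;> simp [hω3]
    rw [e3]
    abel
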